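/- Let k ≥ 1, ρ ∈ (0,1)^k, and let P ∈ (0,1)^{k×k} be a symmetric matrix. Suppose the matrix P · diag(ρ) has k distinct nonzero eigenvalues. Then there exists a finite set 𝒴 ⊆ ℝ such that for every y > 0 with y ∉ 𝒴, the matrix P^{(y)} with entries P^{(y)}_{ij} = ρ_j (P_{ij} − y(1−P_{ij})) has k distinct nonzero eigenvalues. -/

import Mathlib

/-- `P^{(y)}_{ij} = ρ_j (P_{ij} − y(1−P_{ij}))`; note `P^{(0)} = P · diag(ρ)`. -/
noncomputable def Pmat {k : ℕ} (ρ : Fin k → ℝ) (P : Matrix (Fin k) (Fin k) ℝ)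
    (y : ℝ) : Matrix (Fin k) (Fin k) ℝ :=
  Matrix.of fun i j => ρ j * (P i j - y * (1 - P i j))

/-- The characteristic polynomial of a real matrix, viewed over `ℂ`. -/
noncomputable def charpolyC {k : ℕ} (M : Matrix (Fin k) (Fin k) ℝ) : Polynomial ℂ :=
  M.charpoly.map (algebraMap ℝ ℂ)

open Polynomial in
/-- A resultant-like matrix: entries are the coefficients of `X^j * q mod p`. -/
noncomputable def resMat {K : Type*} [CommRing K] (k : ℕ) (p q : Polynomial K) :
    Matrix (Fin k) (Fin k) K :=
  Matrix.of fun i j => ((X ^ (j : ℕ) * q) %ₘ p).coeff i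

open Polynomial

lemma resMat_map {A B : Type*} [CommRing A] [CommRing B] (f : A →+* B) (k : ℕ)
    (p q : Polynomial A) (hp : p.Monic) :
    (resMat k p q).map f = resMat k (p.map f) (q.map f) := by
  ext i j
  simp only [resMat, Matrix.map_apply, Matrix.of_apply, ← coeff_map,
    Polynomial.map_modByMonic f hp, Polynomial.map_mul, Polynomial.map_pow, Polynomial.map_X]

/-- The polynomial with coefficient vector `v`. -/
noncomputable def bpoly {K : Type*} [CommRing K] {k : ℕ} (v : Fin k → K) : Polynomial K :=
  ∑ j : Fin k, monomial (j : ℕ) (v j)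

lemma bpoly_coeff {K : Type*} [CommRing K] {k : ℕ} (v : Fin k → K) (j : Fin k) :
    (bpoly v).coeff (j : ℕ) = v j := by
  rw [bpoly, finset_sum_coeff]
  rw [Finset.sum_eq_single j]
  · simp [coeff_monomial]
  · intro j' _ hj'
    rw [coeff_monomial, if_neg (fun h => hj' (Fin.ext h))]
  · simp

lemma bpoly_degree {K : Type*} [CommRing K] {k : ℕ} (v : Fin k → K) :
    (bpoly v).degree < (k : ℕ) := by
  refine lt_of_le_of_lt (degree_sum_le _ _) ?_
  rw [Finset.sup_lt_iff (by exact_mod_cast WithBot.bot_lt_coe k)]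
  intro j _
  exact lt_of_le_of_lt (degree_monomial_le _ _) (by exact_mod_cast j.2)

lemma resMat_mulVec {K : Type*} [CommRing K] {k : ℕ} (p q : Polynomial K)
    (v : Fin k → K) (i : Fin k) :
    (resMat k p q).mulVec v i = ((bpoly v * q) %ₘ p).coeff i := by
  have hb : bpoly v * q = ∑ j : Fin k, v j • (X ^ (j : ℕ) * q) := by
    rw [bpoly, Finset.sum_mul]
    refine Finset.sum_congr rfl fun j _ => ?_
    rw [smul_eq_C_mul, ← C_mul_X_pow_eq_monomial, mul_assoc]
  have hmod : (bpoly v * q) %ₘ p = ∑ j : Fin k, v j • ((X ^ (j : ℕ) * q) %ₘ p) := by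
    have : ∀ r : Polynomial K, r %ₘ p = modByMonicHom p r := fun r => rfl
    rw [hb, this, map_sum]
    refine Finset.sum_congr rfl fun j _ => ?_
    rw [map_smul]; rfl
  rw [hmod, finset_sum_coeff]
  simp only [coeff_smul, smul_eq_mul]
  simp only [Matrix.mulVec, dotProduct, resMat, Matrix.of_apply]
  exact Finset.sum_congr rfl fun j _ => mul_comm _ _

lemma det_resMat_ne_zero_iff {K : Type*} [Field K] {k : ℕ} (hk : 1 ≤ k)
    (p q : Polynomial K) (hp : p.Monic) (hdeg : p.natDegree = k) :
    (resMat k p q).det ≠ 0 ↔ IsCoprime p q := by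
  have hpne : p ≠ 0 := hp.ne_zero
  have hpdeg : p.degree = (k : ℕ) := by rw [degree_eq_natDegree hpne, hdeg]
  constructor
  · intro hdet
    -- solve for the vector representing 1
    set M := resMat k p q with hM
    set v : Fin k → K := M⁻¹.mulVec (fun i : Fin k => if (i : ℕ) = 0 then (1 : K) else 0) with hv
    have hMv : M.mulVec v = fun i : Fin k => if (i : ℕ) = 0 then (1 : K) else 0 := by
      rw [hv, Matrix.mulVec_mulVec, Matrix.mul_nonsing_inv M (isUnit_iff_ne_zero.mpr hdet),
        Matrix.one_mulVec]
    have hr : (bpoly v * q) %ₘ p = 1 := by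
      ext n
      by_cases hn : n < k
      · have := congrFun hMv ⟨n, hn⟩
        rw [resMat_mulVec] at this
        rw [this]
        rcases Nat.eq_zero_or_pos n with h0 | h0
        · simp [h0]
        · simp [Nat.pos_iff_ne_zero.mp h0, coeff_one]
      · push_neg at hn
        rw [coeff_eq_zero_of_degree_lt, coeff_one, if_neg (by omega)]
        refine lt_of_lt_of_le (degree_modByMonic_lt _ hp) ?_
        rw [hpdeg]; exact_mod_cast hn
    have key := modByMonic_add_div (bpoly v * q) p
    rw [hr] at key
    exact ⟨-(bpoly v * q /ₘ p), bpoly v, by linear_combination -key⟩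
  · intro hcop
    intro hdet
    obtain ⟨v, hvne, hMv⟩ := (Matrix.exists_mulVec_eq_zero_iff).mpr hdet
    have hr : (bpoly v * q) %ₘ p = 0 := by
      ext n
      by_cases hn : n < k
      · have := congrFun hMv ⟨n, hn⟩
        rw [resMat_mulVec] at this
        rw [coeff_zero]
        simpa using this
      · push_neg at hn
        rw [coeff_eq_zero_of_degree_lt, coeff_zero]
        refine lt_of_lt_of_le (degree_modByMonic_lt _ hp) ?_
        rw [hpdeg]; exact_mod_cast hn
    have hdvd : p ∣ bpoly v * q := (modByMonic_eq_zero_iff_dvd hp).mp hr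
    have hdvdb : p ∣ bpoly v := hcop.dvd_of_dvd_mul_right hdvd
    have hbne : bpoly v ≠ 0 := by
      intro h
      apply hvne
      funext j
      have := bpoly_coeff v j
      rw [h, coeff_zero] at this
      exact this.symm
    have := degree_le_of_dvd hdvdb hbne
    rw [hpdeg] at this
    exact absurd (lt_of_le_of_lt this (bpoly_degree v)) (lt_irrefl _)

theorem stmt13 (k : ℕ) (hk : 1 ≤ k) (ρ : Fin k → ℝ)
    (hρ : ∀ r, ρ r ∈ Set.Ioo (0 : ℝ) 1)
    (P : Matrix (Fin k) (Fin k) ℝ) (hPsymm : P.IsSymm)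
    (hP : ∀ r s, P r s ∈ Set.Ioo (0 : ℝ) 1)
    -- `P · diag(ρ)` has k distinct nonzero eigenvalues
    (hdist : (charpolyC (P * Matrix.diagonal ρ)).roots.toFinset.card = k)
    (hnz : (0 : ℂ) ∉ (charpolyC (P * Matrix.diagonal ρ)).roots) :
    ∃ Y : Set ℝ, Y.Finite ∧ ∀ y : ℝ, 0 < y → y ∉ Y →
      (charpolyC (Pmat ρ P y)).roots.toFinset.card = k ∧
      (0 : ℂ) ∉ (charpolyC (Pmat ρ P y)).roots := by
  classical
  -- the matrix family over ℂ[t]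
  set N : Matrix (Fin k) (Fin k) (Polynomial ℂ) :=
    Matrix.of fun i j => C ((ρ j : ℂ)) * (C ((P i j : ℂ)) - X * (1 - C ((P i j : ℂ)))) with hN
  set G : Polynomial (Polynomial ℂ) := N.charpoly with hG
  have hGmonic : G.Monic := Matrix.charpoly_monic N
  have hGdeg : G.natDegree = k := by
    rw [hG, Matrix.charpoly_natDegree_eq_dim, Fintype.card_fin]
  -- specialization
  have hNmap : ∀ y : ℝ, N.map (evalRingHom (y : ℂ)) = (Pmat ρ P y).map (algebraMap ℝ ℂ) := by
    intro y
    ext i j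
    simp only [Matrix.map_apply, hN, Matrix.of_apply, Pmat, coe_evalRingHom, eval_mul, eval_sub,
      eval_C, eval_X, eval_one, Complex.coe_algebraMap]
    push_cast
    ring
  have hspec : ∀ y : ℝ, G.map (evalRingHom (y : ℂ)) = charpolyC (Pmat ρ P y) := by
    intro y
    rw [hG, ← Matrix.charpoly_map, hNmap y, charpolyC, ← Matrix.charpoly_map]
  -- at y = 0
  have hzero : Pmat ρ P 0 = P * Matrix.diagonal ρ := by
    ext i j
    simp [Pmat, Matrix.mul_diagonal, mul_comm]
  set p₀ : Polynomial ℂ := charpolyC (P * Matrix.diagonal ρ) with hp₀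
  have hp₀eq : G.map (evalRingHom ((0 : ℝ) : ℂ)) = p₀ := by
    rw [hspec 0, hzero]
  have hp₀monic : p₀.Monic := by
    rw [← hp₀eq]; exact hGmonic.map _
  have hp₀ne : p₀ ≠ 0 := hp₀monic.ne_zero
  have hp₀deg : p₀.natDegree = k := by
    rw [← hp₀eq, hGmonic.natDegree_map, hGdeg]
  have hp₀splits : p₀.Splits := IsAlgClosed.splits p₀
  have hp₀card : p₀.roots.card = k := by
    rw [splits_iff_card_roots.mp hp₀splits]; exact hp₀deg
  have hp₀nodup : p₀.roots.Nodup := by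
    rw [← Multiset.toFinset_card_eq_card_iff_nodup, hdist, ← hp₀card]
  have hp₀sep : p₀.Separable := (nodup_roots_iff_of_splits hp₀ne hp₀splits).mp hp₀nodup
  -- the discriminant-like polynomial
  set D : Polynomial ℂ := (resMat k G (derivative G)).det with hD
  have hresmap : ∀ y : ℝ, (resMat k G (derivative G)).map (evalRingHom (y : ℂ)) =
      resMat k (G.map (evalRingHom (y : ℂ))) (derivative (G.map (evalRingHom (y : ℂ)))) := by
    intro y
    rw [resMat_map _ _ _ _ hGmonic, derivative_map]
  have hDeval : ∀ y : ℝ, D.eval (y : ℂ) =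
      (resMat k (G.map (evalRingHom (y : ℂ)))
        (derivative (G.map (evalRingHom (y : ℂ))))).det := by
    intro y
    rw [← hresmap y, ← RingHom.mapMatrix_apply, ← RingHom.map_det]
    rfl
  have hD0 : D.eval ((0 : ℝ) : ℂ) ≠ 0 := by
    rw [hDeval 0, hp₀eq]
    exact (det_resMat_ne_zero_iff hk p₀ (derivative p₀) hp₀monic hp₀deg).mpr hp₀sep
  have hDne : D ≠ 0 := fun h => hD0 (by rw [h, eval_zero])
  -- the constant coefficient polynomial
  set E : Polynomial ℂ := G.coeff 0 with hE
  have hEeval : ∀ y : ℝ, E.eval (y : ℂ) = (G.map (evalRingHom (y : ℂ))).coeff 0 := by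
    intro y
    rw [coeff_map]
    rfl
  have hE0 : E.eval ((0 : ℝ) : ℂ) ≠ 0 := by
    rw [hEeval 0, hp₀eq, coeff_zero_eq_eval_zero]
    intro h
    exact hnz ((mem_roots hp₀ne).mpr h)
  have hEne : E ≠ 0 := fun h => hE0 (by rw [h, eval_zero])
  -- the bad set
  refine ⟨{y : ℝ | (D * E).eval (y : ℂ) = 0}, ?_, ?_⟩
  · have hfin : {z : ℂ | (D * E).IsRoot z}.Finite :=
      finite_setOf_isRoot (mul_ne_zero hDne hEne)
    have : {y : ℝ | (D * E).eval (y : ℂ) = 0} =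
        (fun y : ℝ => (y : ℂ)) ⁻¹' {z : ℂ | (D * E).IsRoot z} := rfl
    rw [this]
    exact Set.Finite.preimage (Complex.ofReal_injective.injOn) hfin
  · intro y _ hy
    simp only [Set.mem_setOf_eq, eval_mul, mul_eq_zero, not_or] at hy
    obtain ⟨hDy, hEy⟩ := hy
    set py : Polynomial ℂ := charpolyC (Pmat ρ P y) with hpy
    have hpyeq : G.map (evalRingHom (y : ℂ)) = py := hspec y
    have hpymonic : py.Monic := by rw [← hpyeq]; exact hGmonic.map _
    have hpyne : py ≠ 0 := hpymonic.ne_zero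
    have hpydeg : py.natDegree = k := by rw [← hpyeq, hGmonic.natDegree_map, hGdeg]
    have hpysep : py.Separable := by
      refine (det_resMat_ne_zero_iff hk py (derivative py) hpymonic hpydeg).mp ?_
      rw [← hpyeq, ← hDeval y]
      exact hDy
    have hpysplits : py.Splits := IsAlgClosed.splits py
    have hpycard : py.roots.card = k := by
      rw [splits_iff_card_roots.mp hpysplits]; exact hpydeg
    constructor
    · rw [Multiset.toFinset_card_of_nodup (nodup_roots hpysep), hpycard]
    · intro h0
      have : py.eval 0 = 0 := (mem_roots hpyne).mp h0
      rw [← coeff_zero_eq_eval_zero, ← hpyeq, ← hEeval y] at this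
      exact hEy this
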